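/- The two-outcome measurement {Π_sym, I − Π_sym} applied to α^{⊗(m−1)} ⊗ β simulates the measurement {|α⟩⟨α|, I − |α⟩⟨α|} applied to β up to error at most 1/m: for every unit vector β ∈ ℂ^d, |⟨w, Π_sym w⟩ − |⟨α, β⟩|²| ≤ 1/m, where w = α^{⊗(m−1)} ⊗ β. -/

import Mathlib

open Finset

/-- Number of permutations of `Fin m` fixing a given point. -/
lemma card_fixing_perm (m : ℕ) (last : Fin m) :
    Fintype.card {π : Equiv.Perm (Fin m) // π last = last} = (m-1).factorial := by
  have e1 : {π : Equiv.Perm (Fin m) // π last = last} ≃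
      {f : Equiv.Perm (Fin m) // ∀ a, ¬ (a ≠ last) → f a = a} := by
    apply Equiv.subtypeEquivRight
    intro f
    constructor
    · intro h a ha
      have : a = last := by simpa using ha
      subst this; exact h
    · intro h; exact h last (by simp)
  have e2 := (Equiv.Perm.subtypeEquivSubtypePerm (fun a : Fin m => a ≠ last)).symm
  rw [Fintype.card_congr (e1.trans e2), Fintype.card_perm]
  congr 1
  rw [Fintype.card_subtype_compl, Fintype.card_subtype_eq, Fintype.card_fin]

/-- The two-outcome measurement `{Π_sym, I − Π_sym}` applied to `α^{⊗(m−1)} ⊗ β`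
simulates the measurement `{|α⟩⟨α|, I − |α⟩⟨α|}` on `β` up to error at most `1/m`:
for every unit vector `β`, `|⟨w, Π_sym w⟩ − |⟨α,β⟩|²| ≤ 1/m`. -/
theorem stmt_6 (m d : ℕ) (hm : 1 ≤ m) (hd : 1 ≤ d)
    (α : Fin d → ℂ) (hα : ∑ i, star (α i) * α i = 1)
    (last : Fin m) (hlast : last = ⟨m - 1, by omega⟩) :
    ∀ β : Fin d → ℂ, (∑ i, star (β i) * β i = 1) →
      ∀ w : (Fin m → Fin d) → ℂ,
        w = (fun f => ∏ i, (if i = last then β (f i) else α (f i))) →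
        ‖((m.factorial : ℂ)⁻¹
                * (∑ π : Equiv.Perm (Fin m), ∑ f, star (w f) * w (f ∘ π))
              - (Complex.normSq (∑ i, star (α i) * β i) : ℂ))‖
          ≤ (m : ℝ)⁻¹ := by
  intro β hβ w hw
  set c : ℂ := ∑ i, star (α i) * β i with hc
  set G : Fin m → Fin d → ℂ := fun j x => if j = last then β x else α x with hG
  have hw' : ∀ f, w f = ∏ i, G i (f i) := by intro f; rw [hw]
  -- inner products
  have hβα : ∑ x, star (β x) * α x = starRingEnd ℂ c := by
    rw [hc, map_sum]
    apply Finset.sum_congr rfl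
    intro x _
    simp [mul_comm]
  -- key per-permutation computation
  have key : ∀ π : Equiv.Perm (Fin m),
      ∑ f : Fin m → Fin d, star (w f) * w (f ∘ π)
        = if π last = last then 1 else (Complex.normSq c : ℂ) := by
    intro π
    have step1 : ∀ f : Fin m → Fin d,
        star (w f) * w (f ∘ π) = ∏ j, (star (G j (f j)) * G (π⁻¹ j) (f j)) := by
      intro f
      have h0 : ∏ i, G i ((f ∘ π) i) = ∏ j, G (π⁻¹ j) (f j) := by
        rw [← Equiv.prod_comp π (fun j => G (π⁻¹ j) (f j))]
        simp
      rw [hw' f, hw' (f ∘ π), star_prod, h0, ← Finset.prod_mul_distrib]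
    simp_rw [step1]
    rw [← Fintype.prod_sum (fun j x => star (G j x) * G (π⁻¹ j) x)]
    by_cases hπ : π last = last
    · have hπ' : π⁻¹ last = last := by
        rw [Equiv.Perm.inv_eq_iff_eq]; exact hπ.symm
      rw [if_pos hπ]
      apply Finset.prod_eq_one
      intro j _
      by_cases hj : j = last
      · have h2 : π⁻¹ j = last := by rw [hj]; exact hπ'
        simp only [hG, if_pos hj, if_pos h2]
        simpa using hβ
      · have h2 : π⁻¹ j ≠ last := by
          intro h
          apply hj
          have h3 := congrArg π h
          simpa [hπ] using h3
        simp only [hG, if_neg hj, if_neg h2]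
        simpa using hα
    · have hπ' : π⁻¹ last ≠ last := by
        intro h
        rw [Equiv.Perm.inv_eq_iff_eq] at h
        exact hπ h.symm
      have hpl : π last ≠ last := hπ
      rw [if_neg hπ]
      have : ∀ j ∈ Finset.univ, (∑ x, star (G j x) * G (π⁻¹ j) x)
          = (if j = last then starRingEnd ℂ c else 1) * (if j = π last then c else 1) := by
        intro j _
        by_cases h1 : j = last
        · have h2 : π⁻¹ j ≠ last := by rw [h1]; exact hπ'
          have h3 : ¬ (j = π last) := by rw [h1]; exact fun h => hpl h.symm
          simp only [hG, if_pos h1, if_neg h2, if_neg h3, mul_one]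
          exact hβα
        · by_cases h2 : j = π last
          · have h3 : π⁻¹ j = last := by rw [h2]; simp
            simp only [hG, if_neg h1, if_pos h3, if_pos h2, one_mul]
            exact hc.symm
          · have h3 : π⁻¹ j ≠ last := by
              intro h
              apply h2
              simpa using congrArg π h
            simp only [hG, if_neg h1, if_neg h3, if_neg h2, mul_one, one_mul]
            simpa using hα
      rw [Finset.prod_congr rfl this, Finset.prod_mul_distrib]
      simp only [Finset.prod_ite_eq', Finset.mem_univ, if_pos]
      rw [← Complex.normSq_eq_conj_mul_self]
  -- sum over permutations
  simp_rw [key]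
  set nsq : ℝ := Complex.normSq c with hnsq
  set N : ℕ := (Finset.univ.filter fun π : Equiv.Perm (Fin m) => π last = last).card with hN
  have hNval : N = (m-1).factorial := by
    rw [hN, ← Fintype.card_subtype, card_fixing_perm]
  have hMN : m.factorial = m * N := by
    rw [hNval]
    have h1 : m = (m - 1) + 1 := by omega
    conv_lhs => rw [h1]
    rw [Nat.factorial_succ]
    congr 1
    omega
  have hNle : N ≤ m.factorial := by rw [hMN]; nlinarith [Nat.one_le_iff_ne_zero.mp hm]
  have hsum : (∑ π : Equiv.Perm (Fin m),
      if π last = last then (1 : ℂ) else (nsq : ℂ))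
      = (N : ℂ) + ((m.factorial - N : ℕ) : ℂ) * (nsq : ℂ) := by
    rw [Finset.sum_ite, Finset.sum_const, Finset.sum_const, ← hN]
    have : (Finset.univ.filter fun π : Equiv.Perm (Fin m) => ¬ π last = last).card
        = m.factorial - N := by
      have h := Finset.card_filter_add_card_filter_not
        (s := (Finset.univ : Finset (Equiv.Perm (Fin m))))
        (p := fun π => π last = last)
      rw [Finset.card_univ, Fintype.card_perm, Fintype.card_fin] at h
      omega
    rw [this]
    simp [nsmul_eq_mul]
  rw [hsum]
  -- Cauchy–Schwarz : nsq ≤ 1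
  have hnsq_le : nsq ≤ 1 := by
    set A : EuclideanSpace ℂ (Fin d) := WithLp.toLp 2 α with hA
    set B : EuclideanSpace ℂ (Fin d) := WithLp.toLp 2 β with hB
    have hinner : (inner ℂ A B : ℂ) = c := by
      rw [hc]
      simp [PiLp.inner_apply, RCLike.inner_apply, hA, hB, Complex.star_def, mul_comm]
    have hnormA : ‖A‖ = 1 := by
      have h1 : ∑ i, Complex.normSq (α i) = 1 := by
        have h2 : ((∑ i, Complex.normSq (α i) : ℝ) : ℂ) = 1 := by
          push_cast
          simp_rw [Complex.normSq_eq_conj_mul_self]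
          simpa [Complex.star_def] using hα
        exact_mod_cast h2
      rw [EuclideanSpace.norm_eq]
      rw [show ∑ i, ‖A i‖^2 = 1 by
        simpa [hA, Complex.sq_norm] using h1]
      exact Real.sqrt_one
    have hnormB : ‖B‖ = 1 := by
      have h1 : ∑ i, Complex.normSq (β i) = 1 := by
        have h2 : ((∑ i, Complex.normSq (β i) : ℝ) : ℂ) = 1 := by
          push_cast
          simp_rw [Complex.normSq_eq_conj_mul_self]
          simpa [Complex.star_def] using hβ
        exact_mod_cast h2
      rw [EuclideanSpace.norm_eq]
      rw [show ∑ i, ‖B i‖^2 = 1 by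
        simpa [hB, Complex.sq_norm] using h1]
      exact Real.sqrt_one
    have := norm_inner_le_norm (𝕜 := ℂ) A B
    rw [hinner, hnormA, hnormB, mul_one] at this
    calc nsq = ‖c‖^2 := by rw [hnsq, ← Complex.sq_norm]
    _ ≤ 1 := by nlinarith [norm_nonneg c]
  have hnsq_nonneg : 0 ≤ nsq := Complex.normSq_nonneg c
  -- final arithmetic
  have hmC : (m : ℂ) ≠ 0 := Nat.cast_ne_zero.mpr (by omega)
  have hNC : (N : ℂ) ≠ 0 := by
    rw [hNval]
    exact_mod_cast Nat.cast_ne_zero.mpr (Nat.factorial_ne_zero _)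
  have hMC : (m.factorial : ℂ) = (m : ℂ) * (N : ℂ) := by exact_mod_cast hMN
  have hE : (m.factorial : ℂ)⁻¹ * ((N : ℂ) + ((m.factorial - N : ℕ) : ℂ) * (nsq : ℂ))
      - (nsq : ℂ) = (((m : ℝ)⁻¹ * (1 - nsq) : ℝ) : ℂ) := by
    rw [Nat.cast_sub hNle, hMC]
    push_cast
    field_simp
    ring
  rw [hE, Complex.norm_real, Real.norm_eq_abs, abs_mul, abs_of_nonneg (by positivity),
    abs_of_nonneg (by linarith)]
  have : 1 - nsq ≤ 1 := by linarith
  calc (m : ℝ)⁻¹ * (1 - nsq) ≤ (m : ℝ)⁻¹ * 1 := by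
        apply mul_le_mul_of_nonneg_left this (by positivity)
  _ = (m : ℝ)⁻¹ := mul_one _
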